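/- arXiv:1109.1902 — 2 statements merged into one kernel-verified Lean document; each statement's English description precedes it below -/
import Mathlib

section
/- Let U be a neighborhood of 0 in ℝ^n and let G₁, G₂ : U → ℝ^n be C^∞ maps with G_i(0) = 0 and first derivative D⁽¹⁾₀G_i = I at 0 for i = 1,2, such that the compositions G₁∘G₂ and G₂∘G₁ are defined on a neighborhood of 0. Then D⁽³⁾₀(G₁∘G₂) − D⁽³⁾₀(G₂∘G₁) = [D⁽²⁾₀G₁, D⁽²⁾₀G₂], where for symmetric bilinear maps Q, Q' : ℝ^n × ℝ^n → ℝ^n the bracket is defined by [Q,Q'](ξ,η,θ) = Q(ξ,Q'(η,θ)) + Q(η,Q'(θ,ξ)) + Q(θ,Q'(ξ,η)) − Q'(ξ,Q(η,θ)) − Q'(η,Q(θ,ξ)) − Q'(θ,Q(ξ,η)). -/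
noncomputable section

/-- `ℝ^n` with the Euclidean norm. -/
abbrev E (n : ℕ) : Type := EuclideanSpace ℝ (Fin n)

/-- The bracket `[Q,Q']` of two (symmetric bilinear) maps. -/
def brk {n : ℕ} (Q Q' : E n → E n → E n) (ξ η θ : E n) : E n :=
  (Q ξ (Q' η θ) + Q η (Q' θ ξ) + Q θ (Q' ξ η))
    - (Q' ξ (Q η θ) + Q' η (Q θ ξ) + Q' θ (Q ξ η))

namespace Stmt17Aux

open Set OrderedFinpartition

/-! ### Enumeration of ordered finpartitions of `3` -/

abbrev P0 : OrderedFinpartition 0 := OrderedFinpartition.atomic 0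
abbrev P1 : OrderedFinpartition 1 := P0.extendLeft
abbrev P2a : OrderedFinpartition 2 := P1.extendLeft
abbrev P2b : OrderedFinpartition 2 := P1.extendMiddle ⟨0, by decide⟩

variable {M : Type*} [AddCommMonoid M]

lemma optsum0 {k : ℕ} (hk : k = 0) (f : Option (Fin k) → M) : ∑ i, f i = f none := by
  subst hk; rw [Fintype.sum_option]; simp

lemma optsum1 {k : ℕ} (hk : k = 1) (f : Option (Fin k) → M) :
    ∑ i, f i = f none + f (some ⟨0, by omega⟩) := by
  subst hk; rw [Fintype.sum_option, Fin.sum_univ_one]; rfl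

lemma optsum2 {k : ℕ} (hk : k = 2) (f : Option (Fin k) → M) :
    ∑ i, f i = f none + f (some ⟨0, by omega⟩) + f (some ⟨1, by omega⟩) := by
  subst hk; rw [Fintype.sum_option, Fin.sum_univ_two, add_assoc]; rfl

lemma sumOFP1 (g : OrderedFinpartition 1 → M) : ∑ c, g c = g P1 := by
  rw [← Fintype.sum_equiv (extendEquiv 0) _ g (fun x ↦ rfl), ← Finset.univ_sigma_univ,
    Finset.sum_sigma, Fintype.sum_unique,
    Subsingleton.elim (default : OrderedFinpartition 0) P0,
    optsum0 (show P0.length = 0 from rfl)]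
  rfl

lemma sumOFP2 (g : OrderedFinpartition 2 → M) : ∑ c, g c = g P2a + g P2b := by
  rw [← Fintype.sum_equiv (extendEquiv 1) _ g (fun x ↦ rfl), ← Finset.univ_sigma_univ,
    Finset.sum_sigma, sumOFP1, optsum1 (show P1.length = 1 from rfl)]
  rfl

lemma sumOFP3 (F : OrderedFinpartition 3 → M) :
    ∑ c, F c =
      (F P2a.extendLeft + F (P2a.extendMiddle ⟨0, by decide⟩)
        + F (P2a.extendMiddle ⟨1, by decide⟩))
      + (F P2b.extendLeft + F (P2b.extendMiddle ⟨0, by decide⟩)) := by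
  rw [← Fintype.sum_equiv (extendEquiv 2) _ F (fun x ↦ rfl), ← Finset.univ_sigma_univ,
    Finset.sum_sigma, sumOFP2, optsum2 (show P2a.length = 2 from rfl),
    optsum1 (show P2b.length = 1 from rfl)]
  rfl

variable {A : Type*} [NormedAddCommGroup A] [NormedSpace ℝ A]

/-- Explicit form of the degree-3 term of the Taylor composition of two formal
multilinear series. -/
lemma taylorComp_three (q p : FormalMultilinearSeries ℝ A A) (v : Fin 3 → A) :
    q.taylorComp p 3 v =
      (q 3 ![p 1 ![v 0], p 1 ![v 1], p 1 ![v 2]]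
      + q 2 ![p 2 ![v 0, v 1], p 1 ![v 2]]
      + q 2 ![p 1 ![v 1], p 2 ![v 0, v 2]])
      + (q 2 ![p 1 ![v 0], p 2 ![v 1, v 2]]
      + q 1 ![p 3 ![v 0, v 1, v 2]]) := by
  have h : q.taylorComp p 3 v
      = ∑ c : OrderedFinpartition 3, q.compAlongOrderedFinpartition p c v :=
    ContinuousMultilinearMap.sum_apply _ _ _
  rw [h, sumOFP3 (fun c ↦ q.compAlongOrderedFinpartition p c v)]
  congr 1
  · congr 1
    · congr 1
      · show q 3 (P2a.extendLeft.applyOrderedFinpartition _ v) = _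
        congr 1
        funext m
        rw [applyOrderedFinpartition_apply]
        fin_cases m
        · show p 1 _ = p 1 ![v 0]
          congr 1; funext i; fin_cases i; rfl
        · show p 1 _ = p 1 ![v 1]
          congr 1; funext i; fin_cases i; rfl
        · show p 1 _ = p 1 ![v 2]
          congr 1; funext i; fin_cases i; rfl
      · show q 2 ((P2a.extendMiddle ⟨0, by decide⟩).applyOrderedFinpartition _ v) = _
        congr 1
        funext m
        rw [applyOrderedFinpartition_apply]
        fin_cases m
        · show p 2 _ = p 2 ![v 0, v 1]
          congr 1; funext i; fin_cases i <;> rfl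
        · show p 1 _ = p 1 ![v 2]
          congr 1; funext i; fin_cases i; rfl
    · show q 2 ((P2a.extendMiddle ⟨1, by decide⟩).applyOrderedFinpartition _ v) = _
      congr 1
      funext m
      rw [applyOrderedFinpartition_apply]
      fin_cases m
      · show p 1 _ = p 1 ![v 1]
        congr 1; funext i; fin_cases i; rfl
      · show p 2 _ = p 2 ![v 0, v 2]
        congr 1; funext i; fin_cases i <;> rfl
  · congr 1
    · show q 2 (P2b.extendLeft.applyOrderedFinpartition _ v) = _
      congr 1
      funext m
      rw [applyOrderedFinpartition_apply]
      fin_cases m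
      · show p 1 _ = p 1 ![v 0]
        congr 1; funext i; fin_cases i; rfl
      · show p 2 _ = p 2 ![v 1, v 2]
        congr 1; funext i; fin_cases i <;> rfl
    · show q 1 ((P2b.extendMiddle ⟨0, by decide⟩).applyOrderedFinpartition _ v) = _
      congr 1
      funext m
      rw [applyOrderedFinpartition_apply]
      fin_cases m
      show p 3 _ = p 3 ![v 0, v 1, v 2]
      congr 1; funext i; fin_cases i <;> rfl

/-- The third derivative of a composition at `0`, as a Taylor composition. -/
lemma key {n : ℕ} {U V : Set (E n)} (hU : U ∈ nhds 0) (hV : V ∈ nhds 0)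
    {G₁ G₂ : E n → E n}
    (hsm₁ : ContDiffOn ℝ (⊤ : ℕ∞) G₁ U) (hsm₂ : ContDiffOn ℝ (⊤ : ℕ∞) G₂ U)
    (h0₂ : G₂ 0 = 0) (hVU : V ⊆ U) :
    iteratedFDeriv ℝ 3 (G₁ ∘ G₂) 0
      = (ftaylorSeries ℝ G₁ 0).taylorComp (ftaylorSeries ℝ G₂ 0) 3 := by
  set t := interior U with ht_def
  have ht : IsOpen t := isOpen_interior
  have h0t : (0 : E n) ∈ t := mem_interior_iff_mem_nhds.2 hU
  have hcont : ContinuousOn G₂ (interior V) :=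
    hsm₂.continuousOn.mono (interior_subset.trans hVU)
  set s := interior V ∩ G₂ ⁻¹' t with hs_def
  have hs : IsOpen s := hcont.isOpen_inter_preimage isOpen_interior ht
  have h0s : (0 : E n) ∈ s := ⟨mem_interior_iff_mem_nhds.2 hV, by simp [h0₂, h0t]⟩
  have hsubU : s ⊆ U := fun x hx => hVU (interior_subset hx.1)
  have hq : HasFTaylorSeriesUpToOn (⊤ : ℕ∞) G₁ (ftaylorSeriesWithin ℝ G₁ t) t :=
    (hsm₁.mono interior_subset).ftaylorSeriesWithin ht.uniqueDiffOn
  have hp : HasFTaylorSeriesUpToOn (⊤ : ℕ∞) G₂ (ftaylorSeriesWithin ℝ G₂ s) s :=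
    (hsm₂.mono hsubU).ftaylorSeriesWithin hs.uniqueDiffOn
  have hcomp := hq.comp hp (fun x hx => hx.2)
  have h3 : (ftaylorSeriesWithin ℝ G₁ t (G₂ 0)).taylorComp (ftaylorSeriesWithin ℝ G₂ s 0) 3
      = iteratedFDerivWithin ℝ 3 (G₁ ∘ G₂) s 0 :=
    hcomp.eq_iteratedFDerivWithin_of_uniqueDiffOn
      (ENat.natCast_le_of_coe_top_le_withTop le_rfl 3) hs.uniqueDiffOn h0s
  rw [iteratedFDerivWithin_of_isOpen 3 hs h0s] at h3
  rw [← h3, h0₂]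
  have e1 : ftaylorSeriesWithin ℝ G₁ t 0 = ftaylorSeries ℝ G₁ 0 := by
    funext k
    exact iteratedFDerivWithin_of_isOpen k ht h0t
  have e2 : ftaylorSeriesWithin ℝ G₂ s 0 = ftaylorSeries ℝ G₂ 0 := by
    funext k
    exact iteratedFDerivWithin_of_isOpen k hs h0s
  rw [e1, e2]

/-- Symmetry of the second derivative of a `C^∞` function at `0`. -/
lemma symm2 {n : ℕ} {U : Set (E n)} (hU : U ∈ nhds 0) {G : E n → E n}
    (hsm : ContDiffOn ℝ (⊤ : ℕ∞) G U) (a b : E n) :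
    iteratedFDeriv ℝ 2 G 0 ![a, b] = iteratedFDeriv ℝ 2 G 0 ![b, a] := by
  rw [iteratedFDeriv_two_apply, iteratedFDeriv_two_apply]
  have hC : ContDiffAt ℝ (⊤ : ℕ∞) G 0 := hsm.contDiffAt hU
  have hs : IsSymmSndFDerivAt ℝ G 0 :=
    hC.isSymmSndFDerivAt (by simp [minSmoothness_of_isRCLikeNormedField]; exact ENat.natCast_le_of_coe_top_le_withTop le_rfl 2)
  simpa using hs a b

lemma deriv1 {n : ℕ} {G : E n → E n}
    (hD : fderiv ℝ G 0 = ContinuousLinearMap.id ℝ (E n)) (x : E n) :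
    iteratedFDeriv ℝ 1 G 0 ![x] = x := by
  rw [iteratedFDeriv_one_apply, hD]
  rfl

end Stmt17Aux

open Stmt17Aux

/-- Equation (2) of the paper: if `G₁, G₂` are `C^∞` maps fixing `0` with
identity first derivative at `0`, whose compositions are defined near `0`, then
`D⁽³⁾₀(G₁∘G₂) − D⁽³⁾₀(G₂∘G₁) = [D⁽²⁾₀G₁, D⁽²⁾₀G₂]`. -/
theorem stmt17 {n : ℕ} (U : Set (E n)) (hU : U ∈ nhds (0 : E n))
    (G₁ G₂ : E n → E n)
    (hsm₁ : ContDiffOn ℝ (⊤ : ℕ∞) G₁ U) (hsm₂ : ContDiffOn ℝ (⊤ : ℕ∞) G₂ U)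
    (h0₁ : G₁ 0 = 0) (h0₂ : G₂ 0 = 0)
    (hD₁ : fderiv ℝ G₁ 0 = ContinuousLinearMap.id ℝ (E n))
    (hD₂ : fderiv ℝ G₂ 0 = ContinuousLinearMap.id ℝ (E n))
    (V : Set (E n)) (hV : V ∈ nhds (0 : E n))
    (hmaps₁ : Set.MapsTo G₁ V U) (hmaps₂ : Set.MapsTo G₂ V U) (hVU : V ⊆ U) :
    ∀ ξ η θ : E n,
      iteratedFDeriv ℝ 3 (G₁ ∘ G₂) 0 ![ξ, η, θ]
          - iteratedFDeriv ℝ 3 (G₂ ∘ G₁) 0 ![ξ, η, θ]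
        = brk (fun a b => iteratedFDeriv ℝ 2 G₁ 0 ![a, b])
            (fun a b => iteratedFDeriv ℝ 2 G₂ 0 ![a, b]) ξ η θ := by
  intro ξ η θ
  have h12 : iteratedFDeriv ℝ 3 (G₁ ∘ G₂) 0 ![ξ, η, θ]
      = (ftaylorSeries ℝ G₁ 0).taylorComp (ftaylorSeries ℝ G₂ 0) 3 ![ξ, η, θ] := by
    rw [key hU hV hsm₁ hsm₂ h0₂ hVU]
  have h21 : iteratedFDeriv ℝ 3 (G₂ ∘ G₁) 0 ![ξ, η, θ]
      = (ftaylorSeries ℝ G₂ 0).taylorComp (ftaylorSeries ℝ G₁ 0) 3 ![ξ, η, θ] := by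
    rw [key hU hV hsm₂ hsm₁ h0₁ hVU]
  rw [h12, h21, taylorComp_three, taylorComp_three]
  have hv0 : (![ξ, η, θ] : Fin 3 → E n) 0 = ξ := rfl
  have hv1 : (![ξ, η, θ] : Fin 3 → E n) 1 = η := rfl
  have hv2 : (![ξ, η, θ] : Fin 3 → E n) 2 = θ := rfl
  rw [hv0, hv1, hv2]
  show (iteratedFDeriv ℝ 3 G₁ 0 ![iteratedFDeriv ℝ 1 G₂ 0 ![ξ], iteratedFDeriv ℝ 1 G₂ 0 ![η],
          iteratedFDeriv ℝ 1 G₂ 0 ![θ]]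
      + iteratedFDeriv ℝ 2 G₁ 0 ![iteratedFDeriv ℝ 2 G₂ 0 ![ξ, η], iteratedFDeriv ℝ 1 G₂ 0 ![θ]]
      + iteratedFDeriv ℝ 2 G₁ 0 ![iteratedFDeriv ℝ 1 G₂ 0 ![η], iteratedFDeriv ℝ 2 G₂ 0 ![ξ, θ]])
      + (iteratedFDeriv ℝ 2 G₁ 0 ![iteratedFDeriv ℝ 1 G₂ 0 ![ξ], iteratedFDeriv ℝ 2 G₂ 0 ![η, θ]]
      + iteratedFDeriv ℝ 1 G₁ 0 ![iteratedFDeriv ℝ 3 G₂ 0 ![ξ, η, θ]])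
      - ((iteratedFDeriv ℝ 3 G₂ 0 ![iteratedFDeriv ℝ 1 G₁ 0 ![ξ], iteratedFDeriv ℝ 1 G₁ 0 ![η],
          iteratedFDeriv ℝ 1 G₁ 0 ![θ]]
      + iteratedFDeriv ℝ 2 G₂ 0 ![iteratedFDeriv ℝ 2 G₁ 0 ![ξ, η], iteratedFDeriv ℝ 1 G₁ 0 ![θ]]
      + iteratedFDeriv ℝ 2 G₂ 0 ![iteratedFDeriv ℝ 1 G₁ 0 ![η], iteratedFDeriv ℝ 2 G₁ 0 ![ξ, θ]])
      + (iteratedFDeriv ℝ 2 G₂ 0 ![iteratedFDeriv ℝ 1 G₁ 0 ![ξ], iteratedFDeriv ℝ 2 G₁ 0 ![η, θ]]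
      + iteratedFDeriv ℝ 1 G₂ 0 ![iteratedFDeriv ℝ 3 G₁ 0 ![ξ, η, θ]])) = _
  simp only [deriv1 hD₁, deriv1 hD₂]
  -- now use symmetry of the second derivatives
  rw [symm2 hU hsm₁ (iteratedFDeriv ℝ 2 G₂ 0 ![ξ, η]) θ,
    symm2 hU hsm₂ ξ θ,
    symm2 hU hsm₂ (iteratedFDeriv ℝ 2 G₁ 0 ![ξ, η]) θ,
    symm2 hU hsm₁ ξ θ]
  unfold brk
  abel

end
end

section
/- Fix v ∈ ℝ^n and define G_v(x) = (1 + 2⟨x,v⟩ + ‖x‖²‖v‖²)⁻¹ · (x + ‖x‖²·v) on the open set of x ∈ ℝ^n where 1 + 2⟨x,v⟩ + ‖x‖²‖v‖² ≠ 0 (this is the conjugate of the translation x ↦ x + v by the inversion φ̄(x) = x/‖x‖², extended by G_v(0) = 0). Then G_v(0) = 0, the first derivative of G_v at 0 is the identity, and the second derivative of G_v at 0 equals 2Q_v, i.e. D⁽²⁾₀G_v(ξ,η) = 2(⟨ξ,η⟩·v − ⟨ξ,v⟩·η − ⟨η,v⟩·ξ) for all ξ, η ∈ ℝ^n. -/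
open scoped RealInnerProductSpace

noncomputable section

/-- The symmetric bilinear map `Q_v(ξ,η) = ⟨ξ,η⟩·v − ⟨ξ,v⟩·η − ⟨η,v⟩·ξ`. -/
def Qv {n : ℕ} (v ξ η : E n) : E n := ⟪ξ, η⟫ • v - ⟪ξ, v⟫ • η - ⟪η, v⟫ • ξ

/-- The germ at `∞` of the translation `x ↦ x + v` of `ℝ^n ⊆ S^n` in the inversion chart
`φ̄(x) = x/‖x‖²`: `G_v(x) = (1 + 2⟨x,v⟩ + ‖x‖²‖v‖²)⁻¹ · (x + ‖x‖²·v)`,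
with `G_v(0) = 0`. -/
def Gv {n : ℕ} (v x : E n) : E n :=
  (1 + 2 * ⟪x, v⟫ + ‖x‖ ^ 2 * ‖v‖ ^ 2)⁻¹ • (x + ‖x‖ ^ 2 • v)

namespace Stmt18Aux

variable {n : ℕ}

def cF (v x : E n) : ℝ := 1 + 2 * ⟪x, v⟫ + ‖x‖ ^ 2 * ‖v‖ ^ 2

def bF (v x : E n) : E n := x + ‖x‖ ^ 2 • v

def cD (v x : E n) : E n →L[ℝ] ℝ :=
  (2 : ℝ) • innerSL ℝ v + ‖v‖ ^ 2 • ((2 : ℝ) • innerSL ℝ x)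

def bD (v x : E n) : E n →L[ℝ] E n :=
  ContinuousLinearMap.id ℝ (E n) + ((2 : ℝ) • innerSL ℝ x).smulRight v

def DM (v x : E n) : E n →L[ℝ] E n :=
  (cF v x)⁻¹ • bD v x + ((-(cF v x ^ 2)⁻¹) • cD v x).smulRight (bF v x)

lemma cF_zero (v : E n) : cF v 0 = 1 := by simp [cF]

lemma cF_zero_ne (v : E n) : cF v 0 ≠ 0 := by rw [cF_zero]; exact one_ne_zero

lemma bF_zero (v : E n) : bF v 0 = 0 := by simp [bF]

lemma hasFDerivAt_inner_right (w x : E n) :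
    HasFDerivAt (fun y : E n => ⟪y, w⟫) (innerSL ℝ w) x := by
  have h : (fun y : E n => ⟪y, w⟫) = fun y => innerSL ℝ w y := by
    funext y; rw [innerSL_apply_apply, real_inner_comm]
  rw [h]; exact (innerSL ℝ w).hasFDerivAt

lemma hasFDerivAt_normSq (x : E n) :
    HasFDerivAt (fun y : E n => ‖y‖ ^ 2) ((2 : ℝ) • innerSL ℝ x) x := by
  have h := (hasStrictFDerivAt_norm_sq x).hasFDerivAt
  convert h using 1
  ext y
  simp [two_smul]
  rw [two_smul, two_smul]

lemma hasFDerivAt_cF (v x : E n) : HasFDerivAt (cF v) (cD v x) x :=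
  (((hasFDerivAt_inner_right v x).const_mul (2 : ℝ)).const_add (1 : ℝ)).add
    ((hasFDerivAt_normSq x).mul_const (‖v‖ ^ 2))

lemma hasFDerivAt_bF (v x : E n) : HasFDerivAt (bF v) (bD v x) x :=
  (hasFDerivAt_id x).add ((hasFDerivAt_normSq x).smul_const v)

lemma hasFDerivAt_cFinv (v x : E n) (hx : cF v x ≠ 0) :
    HasFDerivAt (fun y => (cF v y)⁻¹) ((-(cF v x ^ 2)⁻¹) • cD v x) x :=
  (hasDerivAt_inv hx).comp_hasFDerivAt x (hasFDerivAt_cF v x)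

lemma hasFDerivAt_Gv (v x : E n) (hx : cF v x ≠ 0) :
    HasFDerivAt (Gv v) (DM v x) x :=
  (hasFDerivAt_cFinv v x hx).smul (hasFDerivAt_bF v x)

lemma DM_zero (v : E n) : DM v 0 = ContinuousLinearMap.id ℝ (E n) := by
  ext y
  simp [DM, cF, bF, bD, cD]

lemma contDiff_inner_right (w : E n) : ContDiff ℝ 2 fun y : E n => ⟪y, w⟫ := by
  have h : (fun y : E n => ⟪y, w⟫) = fun y => innerSL ℝ w y := by
    funext y; rw [innerSL_apply_apply, real_inner_comm]
  rw [h]; exact (innerSL ℝ w).contDiff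

lemma contDiffAt_Gv (v : E n) : ContDiffAt ℝ 2 (Gv v) 0 := by
  have hc : ContDiff ℝ 2 (cF v) :=
    (contDiff_const.add (contDiff_const.mul (contDiff_inner_right v))).add
      ((contDiff_norm_sq ℝ).mul contDiff_const)
  have hb : ContDiff ℝ 2 (bF v) := contDiff_id.add ((contDiff_norm_sq ℝ).smul contDiff_const)
  exact (hc.contDiffAt.inv (cF_zero_ne v)).smul hb.contDiffAt

lemma diff_negsq (v : E n) : DifferentiableAt ℝ (fun x => -(cF v x ^ 2)⁻¹) 0 :=
  ((((hasFDerivAt_cF v 0).differentiableAt.pow 2).inv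
    (by rw [Pi.pow_apply, cF_zero]; norm_num)).neg)

end Stmt18Aux

open Stmt18Aux

/-- Equation (1) of the paper: `G_v(0) = 0`, the first derivative of `G_v`
at `0` is the identity, and the second derivative of `G_v` at `0` equals `2Q_v`. -/
theorem stmt18 {n : ℕ} (v : E n) :
    Gv v 0 = 0 ∧
    fderiv ℝ (Gv v) 0 = ContinuousLinearMap.id ℝ (E n) ∧
    ∀ ξ η : E n, iteratedFDeriv ℝ 2 (Gv v) 0 ![ξ, η] = (2 : ℝ) • Qv v ξ η := by
  refine ⟨by simp [Gv], ?_, ?_⟩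
  · rw [(hasFDerivAt_Gv v 0 (cF_zero_ne v)).fderiv, DM_zero]
  · have hne : ∀ᶠ x in nhds (0 : E n), cF v x ≠ 0 :=
      (hasFDerivAt_cF v 0).continuousAt.eventually_ne (cF_zero_ne v)
    have hev : fderiv ℝ (Gv v) =ᶠ[nhds (0 : E n)] DM v :=
      hne.mono fun x hx => (hasFDerivAt_Gv v x hx).fderiv
    intro ξ η
    rw [iteratedFDeriv_two_apply, Matrix.cons_val_zero, Matrix.cons_val_one, Matrix.cons_val_zero,
      hev.fderiv_eq]
    -- derivative of `fun x => DM v x η` at `0`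
    have hfun : (fun x => DM v x η) =
        fun x => (cF v x)⁻¹ • (η + (2 * ⟪x, η⟫) • v)
          + (-(cF v x ^ 2)⁻¹ * (2 * ⟪v, η⟫ + ‖v‖ ^ 2 * (2 * ⟪x, η⟫))) • bF v x := by
      funext x
      simp only [DM, bD, cD, ContinuousLinearMap.add_apply, ContinuousLinearMap.smul_apply,
        ContinuousLinearMap.smulRight_apply, ContinuousLinearMap.id_apply, innerSL_apply_apply,
        smul_eq_mul]
    have hA2 : HasFDerivAt (fun x : E n => η + (2 * ⟪x, η⟫) • v)
        (((2 : ℝ) • innerSL ℝ η).smulRight v) 0 :=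
      (((hasFDerivAt_inner_right η 0).const_mul (2 : ℝ)).smul_const v).const_add η
    have hA := (hasFDerivAt_cFinv v 0 (cF_zero_ne v)).smul hA2
    have hs : DifferentiableAt ℝ
        (fun x : E n => -(cF v x ^ 2)⁻¹ * (2 * ⟪v, η⟫ + ‖v‖ ^ 2 * (2 * ⟪x, η⟫))) 0 :=
      (diff_negsq v).mul ((differentiableAt_const (2 * ⟪v, η⟫)).add
        (((hasFDerivAt_inner_right η 0).differentiableAt.const_mul (2 : ℝ)).const_mul (‖v‖ ^ 2)))
    have hB := hs.hasFDerivAt.smul (hasFDerivAt_bF v 0)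
    have htot := hA.add hB
    change HasFDerivAt (fun x => (cF v x)⁻¹ • (η + (2 * ⟪x, η⟫) • v)
          + (-(cF v x ^ 2)⁻¹ * (2 * ⟪v, η⟫ + ‖v‖ ^ 2 * (2 * ⟪x, η⟫))) • bF v x) _ 0 at htot
    rw [← hfun] at htot
    -- relate `fderiv ℝ (DM v) 0 ξ η` with the derivative of `fun x => DM v x η`
    have hdf : DifferentiableAt ℝ (fderiv ℝ (Gv v)) 0 :=
      ((contDiffAt_Gv v).fderiv_right (m := 1) (by norm_num)).differentiableAt (by norm_num)
    have hDMdiff : DifferentiableAt ℝ (DM v) 0 := hdf.congr_of_eventuallyEq hev.symm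
    have happ : HasFDerivAt (fun x => DM v x η)
        ((ContinuousLinearMap.apply ℝ (E n) η).comp (fderiv ℝ (DM v) 0)) 0 :=
      (ContinuousLinearMap.apply ℝ (E n) η).hasFDerivAt.comp 0 hDMdiff.hasFDerivAt
    have key := happ.unique htot
    have : fderiv ℝ (DM v) 0 ξ η
        = (ContinuousLinearMap.apply ℝ (E n) η).comp (fderiv ℝ (DM v) 0) ξ := rfl
    rw [this, key]
    simp only [ContinuousLinearMap.add_apply, ContinuousLinearMap.smul_apply,
      ContinuousLinearMap.smulRight_apply, innerSL_apply_apply, cF_zero, bF_zero, bD, cD,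
      ContinuousLinearMap.id_apply, inner_zero_left, mul_zero, add_zero, zero_smul, smul_zero,
      one_pow, inv_one, one_smul, neg_smul, neg_neg, Qv, smul_sub, smul_smul, smul_eq_mul,
      Pi.add_apply, Pi.neg_apply, Pi.smul_apply, ContinuousLinearMap.neg_apply,
      ContinuousLinearMap.coe_smul', ContinuousLinearMap.coe_add']
    rw [real_inner_comm η ξ, real_inner_comm v ξ, real_inner_comm v η]
    module

end
end
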